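/- Let C be a centralic category, let f, g : X → Y be central morphisms with cooperators ρ_f, ρ_g : X × Y → Y for f with 1_Y and g with 1_Y respectively, and let h : X → Y be any morphism. Then the action f ⋆ g := ρ_f ∘ ⟨1_X, g⟩ is associative and unital: (f ⋆ g) ⋆ h = f ⋆ (g ⋆ h) (where f ⋆ g, being central, acts via its cooperator with 1_Y), and 0 ⋆ h = h where 0 : X → Y is the zero morphism (which is central with cooperator the second projection π₂ : X × Y → Y). -/

import Mathlib

open CategoryTheory CategoryTheory.Limits

universe v u

/-- A pointed category with binary products is *centralic*. -/
def Centralic (C : Type u) [Category.{v} C] [HasZeroObject C] [HasZeroMorphisms C]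
    [HasBinaryProducts C] : Prop :=
  ∀ ⦃X Y Z S : C⦄ (f : X ⨯ Y ⟶ Z) (x x' : S ⟶ X) (y : S ⟶ Y),
    prod.lift x 0 ≫ f = prod.lift x' 0 ≫ f →
    prod.lift x y ≫ f = prod.lift x' y ≫ f

/-- `ρ : A ⨯ B ⟶ X` is a cooperator for `f : A ⟶ X` and `g : B ⟶ X`. -/
def IsCooperator {C : Type u} [Category.{v} C] [HasZeroObject C] [HasZeroMorphisms C]
    [HasBinaryProducts C] {A B X : C} (f : A ⟶ X) (g : B ⟶ X) (ρ : A ⨯ B ⟶ X) : Prop :=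
  prod.lift (𝟙 A) 0 ≫ ρ = f ∧ prod.lift 0 (𝟙 B) ≫ ρ = g

/-- Two morphisms with common codomain commute if they admit a cooperator. -/
def Commutes {C : Type u} [Category.{v} C] [HasZeroObject C] [HasZeroMorphisms C]
    [HasBinaryProducts C] {A B X : C} (f : A ⟶ X) (g : B ⟶ X) : Prop :=
  ∃ ρ : A ⨯ B ⟶ X, IsCooperator f g ρ

/-- A morphism `f : A ⟶ B` is central if it commutes with `𝟙 B`. -/
def Central {C : Type u} [Category.{v} C] [HasZeroObject C] [HasZeroMorphisms C]
    [HasBinaryProducts C] {A B : C} (f : A ⟶ B) : Prop :=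
  Commutes f (𝟙 B)


section Aux
variable {C : Type u} [Category.{v} C] [HasZeroObject C] [HasZeroMorphisms C]
  [HasBinaryProducts C]

lemma coop_left {A X : C} {k : A ⟶ X} {ρ : A ⨯ X ⟶ X}
    (hρ : prod.lift (𝟙 A) 0 ≫ ρ = k) {S : C} (s : S ⟶ A) :
    prod.lift s 0 ≫ ρ = s ≫ k := by
  rw [show prod.lift s (0 : S ⟶ X) = s ≫ prod.lift (𝟙 A) 0 by simp,
    Category.assoc, hρ]

lemma coop_right {A X : C} {ρ : A ⨯ X ⟶ X}
    (hρ : prod.lift 0 (𝟙 X) ≫ ρ = 𝟙 X) {S : C} (t : S ⟶ X) :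
    prod.lift 0 t ≫ ρ = t := by
  rw [show prod.lift (0 : S ⟶ A) t = t ≫ prod.lift 0 (𝟙 X) by simp,
    Category.assoc, hρ, Category.comp_id]

lemma coop_unique (hC : Centralic C) {X Y : C} {k : X ⟶ Y} {ρ ρ' : X ⨯ Y ⟶ Y}
    (h1 : IsCooperator k (𝟙 Y) ρ) (h2 : IsCooperator k (𝟙 Y) ρ') : ρ = ρ' := by
  set F : (X ⨯ X) ⨯ Y ⟶ Y :=
    prod.lift (prod.fst ≫ prod.fst)
      (prod.lift (prod.fst ≫ prod.snd) prod.snd ≫ ρ') ≫ ρ with hF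
  have key := hC F (prod.lift prod.fst 0) (prod.lift 0 prod.fst)
      (prod.snd : X ⨯ Y ⟶ Y) ?_
  · calc ρ = prod.lift (prod.fst : X ⨯ Y ⟶ X) prod.snd ≫ ρ := by simp
    _ = prod.lift (prod.lift prod.fst 0) prod.snd ≫ F := by
        rw [hF]
        simp only [prod.comp_lift, Category.assoc, prod.lift_fst, prod.lift_snd,
          zero_comp, ← Category.assoc]
        rw [coop_right h2.2]
    _ = prod.lift (prod.lift 0 prod.fst) prod.snd ≫ F := key
    _ = ρ' := by
        rw [hF]
        simp only [prod.comp_lift, Category.assoc, prod.lift_fst, prod.lift_snd,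
          zero_comp, ← Category.assoc]
        rw [show prod.lift (prod.fst : X ⨯ Y ⟶ X) prod.snd = 𝟙 _ by simp,
          Category.id_comp]
        exact coop_right h1.2 ρ'
  · rw [hF]
    simp only [prod.comp_lift, Category.assoc, prod.lift_fst, prod.lift_snd,
      zero_comp, comp_zero, ← Category.assoc]
    rw [coop_left h2.1, coop_left h2.1, zero_comp]
    rw [coop_left h1.1, coop_right h1.2]

end Aux

/-- The action `f ⋆ g := ρ_f ∘ ⟨1_X, g⟩` is associative and unital. -/
theorem stmt9 (C : Type u) [Category.{v} C] [HasZeroObject C] [HasZeroMorphisms C]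
    [HasBinaryProducts C] (hC : Centralic C)
    {X Y : C} (f g : X ⟶ Y) (h : X ⟶ Y) (ρf ρg : X ⨯ Y ⟶ Y)
    (hρf : IsCooperator f (𝟙 Y) ρf) (hρg : IsCooperator g (𝟙 Y) ρg) :
    (∀ ρfg : X ⨯ Y ⟶ Y, IsCooperator (prod.lift (𝟙 X) g ≫ ρf) (𝟙 Y) ρfg →
      -- (f ⋆ g) ⋆ h = f ⋆ (g ⋆ h)
      prod.lift (𝟙 X) h ≫ ρfg = prod.lift (𝟙 X) (prod.lift (𝟙 X) h ≫ ρg) ≫ ρf) ∧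
      -- 0 ⋆ h = h, where `0 : X ⟶ Y` is central with cooperator `π₂`
      (IsCooperator (0 : X ⟶ Y) (𝟙 Y) (prod.snd : X ⨯ Y ⟶ Y) ∧
        prod.lift (𝟙 X) h ≫ (prod.snd : X ⨯ Y ⟶ Y) = h) := by
  refine ⟨fun ρfg hρfg => ?_, ⟨prod.lift_snd _ _, prod.lift_snd _ _⟩, prod.lift_snd _ _⟩
  set σ : X ⨯ Y ⟶ Y := prod.lift prod.fst ρg ≫ ρf with hσ
  have hσcoop : IsCooperator (prod.lift (𝟙 X) g ≫ ρf) (𝟙 Y) σ := by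
    constructor
    · rw [hσ, ← Category.assoc, prod.comp_lift, prod.lift_fst]
      have : prod.lift (𝟙 X) (0 : X ⟶ Y) ≫ ρg = g := hρg.1
      rw [this]
    · rw [hσ, ← Category.assoc, prod.comp_lift, prod.lift_fst, hρg.2, hρf.2]
  rw [coop_unique hC hρfg hσcoop, hσ, ← Category.assoc, prod.comp_lift,
    prod.lift_fst]
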